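/- Let (R, m) be a Noetherian local Cohen–Macaulay ring of dimension three with infinite residue field, let I be an m-primary ideal of R, and let q ≥ n(I) be an integer, where n(I) is the postulation number of I. Then the Hilbert coefficients of I^q are given by: e_0(I^q) = q³·e_0(I), e_1(I^q) = q²(q−1)·e_0(I) + q²·e_1(I), e_2(I^q) = binom(q,3)·e_0(I) + binom(q,2)·e_1(I) + q·e_2(I), and e_3(I^q) = e_3(I). -/

import Mathlib

open Finset IsLocalRing

/-- The length of the `R`-module `R ⧸ I`, as a natural number. -/
noncomputable def lam (R : Type*) [CommRing R] (I : Ideal R) : ℕ :=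
  (WithBot.unbotD 0 (Order.krullDim (Submodule R (R ⧸ I)))).toNat

/-- The length of `A / B` (for ideals `B ⊆ A`, realized as the quotient of `A` by `A ∩ B`). -/
noncomputable def lamQ {R : Type*} [CommRing R] (A B : Ideal R) : ℕ :=
  (WithBot.unbotD 0 (Order.krullDim (Submodule R (A ⧸ (Submodule.comap A.subtype B))))).toNat

/-- `J` is a reduction of `I`. -/
def IsReduction {R : Type*} [CommRing R] (J I : Ideal R) : Prop :=
  J ≤ I ∧ ∃ n : ℕ, I ^ (n + 1) = J * I ^ n

/-- `J` is a minimal reduction of `I`. -/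
def IsMinimalReduction {R : Type*} [CommRing R] (J I : Ideal R) : Prop :=
  IsReduction J I ∧ ∀ K : Ideal R, IsReduction K I → K ≤ J → K = J

/-- The depth of a ring `S` with respect to an ideal `J`: the supremum of lengths of
regular sequences contained in `J`. -/
noncomputable def ringDepth (S : Type*) [CommRing S] (J : Ideal S) : ℕ∞ :=
  sSup {n : ℕ∞ | ∃ rs : List S, (∀ r ∈ rs, r ∈ J) ∧
    RingTheory.Sequence.IsRegular S rs ∧ (rs.length : ℕ∞) = n}

/-- `R` is a Cohen-Macaulay local ring of dimension `d`. -/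
def IsCohenMacaulayLocal (R : Type*) [CommRing R] [IsLocalRing R] (d : ℕ) : Prop :=
  ringKrullDim R = d ∧ ringDepth R (maximalIdeal R) = d

/-- The maximal homogeneous ideal of the associated graded ring
`gr_I(R) = R[It]/I·R[It]`. -/
noncomputable def grMaxIdeal {R : Type*} [CommRing R] [IsLocalRing R] (I : Ideal R) :
    Ideal ((reesAlgebra I) ⧸ (Ideal.map (algebraMap R (reesAlgebra I)) I)) :=
  Ideal.map (Ideal.Quotient.mk _)
    (Ideal.map (algebraMap R (reesAlgebra I)) (maximalIdeal R) ⊔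
      RingHom.ker (((Polynomial.aeval (0 : R)).comp (reesAlgebra I).val :
        reesAlgebra I →ₐ[R] R) : reesAlgebra I →+* R))

/-- The depth of the associated graded ring `gr_I(R)` with respect to its maximal
homogeneous ideal. -/
noncomputable def grDepth {R : Type*} [CommRing R] [IsLocalRing R] (I : Ideal R) : ℕ∞ :=
  ringDepth ((reesAlgebra I) ⧸ (Ideal.map (algebraMap R (reesAlgebra I)) I)) (grMaxIdeal I)

/-- `e` is the sequence of Hilbert coefficients of the `m`-primary ideal `I` in a
`d`-dimensional local ring: for all large `n`,
`λ(R/Iⁿ) = ∑_{j=0}^{d} (-1)^j e_j (n+d-j-1 choose d-j)`. -/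
def IsHilbertCoeffs {R : Type*} [CommRing R] (I : Ideal R) (d : ℕ) (e : ℕ → ℤ) : Prop :=
  ∃ N : ℕ, ∀ n : ℕ, N ≤ n → (lam R (I ^ n) : ℤ) =
    ∑ j ∈ Finset.range (d + 1), (-1) ^ j * e j * ((n + d - j - 1).choose (d - j) : ℤ)

/-- `x` is integral over the ideal `I`: it satisfies an equation
`x^k + a₁x^{k-1} + ⋯ + a_k = 0` with `aᵢ ∈ Iⁱ`. -/
def IsIntegralOverIdeal {R : Type*} [CommRing R] (I : Ideal R) (x : R) : Prop :=
  ∃ k : ℕ, 0 < k ∧ ∃ a : ℕ → R, (∀ i, 1 ≤ i → i ≤ k → a i ∈ I ^ i) ∧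
    x ^ k + ∑ i ∈ Finset.Icc 1 k, a i * x ^ (k - i) = 0

/-- `I` is integrally closed. -/
def IsIntegrallyClosedIdeal {R : Type*} [CommRing R] (I : Ideal R) : Prop :=
  ∀ x : R, IsIntegralOverIdeal I x → x ∈ I

/-- The integral closure of the ideal `I` (the set of elements integral over `I` is an
ideal, so taking the span does not change it). -/
noncomputable def intClosure {R : Type*} [CommRing R] (I : Ideal R) : Ideal R :=
  Ideal.span {x | IsIntegralOverIdeal I x}


private lemma c2'' (n : ℕ) : (n.choose 2 : ℤ) * 2 = n * (n - 1) := by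
  induction n with
  | zero => simp
  | succ k ih =>
    rw [Nat.choose_succ_succ]
    push_cast at ih ⊢
    rw [Nat.choose_one_right] at *
    push_cast
    linear_combination ih

private lemma c3'' (n : ℕ) : (n.choose 3 : ℤ) * 6 = n * (n - 1) * (n - 2) := by
  induction n with
  | zero => simp
  | succ k ih =>
    rw [Nat.choose_succ_succ]
    push_cast
    linear_combination ih + 3 * c2'' k

private lemma vanish'' (a b c d : ℤ) (M : ℕ)
    (h : ∀ n : ℕ, M ≤ n →
      a * ((n + 2) * (n + 1) * n) + b * ((n + 1) * n) + c * n + d = 0) :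
    a = 0 ∧ b = 0 ∧ c = 0 ∧ d = 0 := by
  have h0 := h M le_rfl
  have h1 := h (M + 1) (by omega)
  have h2 := h (M + 2) (by omega)
  have h3 := h (M + 3) (by omega)
  push_cast at h0 h1 h2 h3
  set x := (M : ℤ)
  have ha : 6 * a = 0 := by linear_combination h3 - 3 * h2 + 3 * h1 - h0
  have ha' : a = 0 := by omega
  subst ha'
  have hb : 2 * b = 0 := by linear_combination h2 - 2 * h1 + h0
  have hb' : b = 0 := by omega
  subst hb'
  have hc : c = 0 := by linear_combination h1 - h0
  subst hc
  have hd : d = 0 := by linear_combination h0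
  exact ⟨rfl, rfl, rfl, hd⟩

/-- **(From the proof of Theorem 4.1), Corso–Polini–Rossi.**
Let `(R, m)` be a three-dimensional local Cohen-Macaulay ring with infinite residue
field, `I` an `m`-primary ideal, and `q ≥ n(I)` (`q` being at least the postulation
number means exactly that the Hilbert polynomial equals the Hilbert-Samuel function at
all `n ≥ q`). Then the Hilbert coefficients `ε_i = e_i(I^q)` are given by
`ε₀ = q³e₀`, `ε₁ = q²(q−1)e₀ + q²e₁`, `ε₂ = C(q,3)e₀ + C(q,2)e₁ + qe₂`, `ε₃ = e₃`. -/
theorem stmt_17 {R : Type*} [CommRing R] [IsNoetherianRing R] [IsLocalRing R]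
    [Infinite (ResidueField R)] (hCM : IsCohenMacaulayLocal R 3)
    (I : Ideal R) (hI : I.radical = maximalIdeal R)
    (e : ℕ → ℤ) (q : ℕ)
    (hq : ∀ n : ℕ, q ≤ n → (lam R (I ^ n) : ℤ) =
      ∑ j ∈ Finset.range 4, (-1) ^ j * e j * ((n + 3 - j - 1).choose (3 - j) : ℤ))
    (ε : ℕ → ℤ) (hε : IsHilbertCoeffs (I ^ q) 3 ε) :
    ε 0 = (q : ℤ) ^ 3 * e 0 ∧
    ε 1 = (q : ℤ) ^ 2 * ((q : ℤ) - 1) * e 0 + (q : ℤ) ^ 2 * e 1 ∧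
    ε 2 = (q.choose 3 : ℤ) * e 0 + (q.choose 2 : ℤ) * e 1 + (q : ℤ) * e 2 ∧
    ε 3 = e 3 := by
  obtain ⟨N, hN⟩ := hε
  have key : ∀ n : ℕ, max N 1 ≤ n →
      (ε 0 - (q : ℤ) ^ 3 * e 0) * ((n + 2) * (n + 1) * n)
      + (-3 * (ε 1 - ((q : ℤ) ^ 2 * ((q : ℤ) - 1) * e 0 + (q : ℤ) ^ 2 * e 1))) * ((n + 1) * n)
      + (6 * (ε 2 - ((q.choose 3 : ℤ) * e 0 + (q.choose 2 : ℤ) * e 1 + (q : ℤ) * e 2))) * n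
      + (-6 * (ε 3 - e 3)) = 0 := by
    intro n hn
    have hn1 : 1 ≤ n := le_trans (le_max_right N 1) hn
    have h1 := hN n (le_trans (le_max_left N 1) hn)
    have h2 := hq (q * n) (by nlinarith)
    rw [← pow_mul] at h1
    rw [h1] at h2
    simp only [Finset.sum_range_succ, Finset.sum_range_zero] at h2
    norm_num [Nat.choose_one_right, Nat.add_sub_cancel] at h2
    linear_combination (norm := (push_cast; ring1)) 6 * h2 - ε 0 * c3'' (n+2)
      + 3 * ε 1 * c2'' (n+1) + e 0 * c3'' (q*n+2) - 3 * e 1 * c2'' (q*n+1)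
      - (n:ℤ) * e 0 * c3'' q - 3 * (n:ℤ) * e 1 * c2'' q
  obtain ⟨pa, pb, pc, pd⟩ := vanish'' _ _ _ _ (max N 1) key
  refine ⟨by linarith, by linarith, by linarith, by linarith⟩
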